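/- arXiv:2210.15145 — 3 statements merged into one kernel-verified Lean document; each statement's English description precedes it below -/
import Mathlib

section
/- Consider the substitution p ↦ exp(λ g^×) p applied to the differenced pseudo-range ρ(p) = ‖Rp − s_k‖ − ‖Rp − s_l‖ with n_j := (Rp − s_j)/‖Rp − s_j‖. Then d/dλ|_{λ=0} ρ(exp(λg^×)p) = (n_k − n_l)ᵀ R (g × p). Hence the rotation about axis g is infinitesimally unobservable at p if and only if g × p lies in the null space of the row (n_k − n_l)ᵀR. -/
open Matrix

def skew (v : Fin 3 → ℝ) : Matrix (Fin 3) (Fin 3) ℝ :=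
  !![0, -v 2, v 1; v 2, 0, -v 0; -v 1, v 0, 0]

noncomputable def norm3 (x : Fin 3 → ℝ) : ℝ := Real.sqrt (∑ i, x i ^ 2)

section aux

attribute [local instance] Matrix.linftyOpNormedRing Matrix.linftyOpNormedAlgebra

noncomputable def entryCLM (i j : Fin 3) : Matrix (Fin 3) (Fin 3) ℝ →L[ℝ] ℝ :=
  LinearMap.mkContinuous (Matrix.entryLinearMap ℝ ℝ i j) 1 fun M => by
    rw [one_mul]
    have h1 : ‖M i j‖₊ ≤ ∑ j', ‖M i j'‖₊ :=
      Finset.single_le_sum (f := fun j' => ‖M i j'‖₊) (fun _ _ => zero_le) (Finset.mem_univ j)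
    have h2 : (∑ j', ‖M i j'‖₊) ≤ ‖M‖₊ := by
      rw [Matrix.linfty_opNNNorm_def]
      exact Finset.le_sup (f := fun i => ∑ j', ‖M i j'‖₊) (Finset.mem_univ i)
    exact_mod_cast h1.trans h2

lemma hasDerivAt_exp_entry (A : Matrix (Fin 3) (Fin 3) ℝ) (i j : Fin 3) :
    HasDerivAt (fun lam : ℝ => NormedSpace.exp (lam • A) i j) (A i j) 0 := by
  have h := hasDerivAt_exp_smul_const (𝕂 := ℝ) A 0
  simp only [zero_smul, NormedSpace.exp_zero, one_mul] at h
  have h2 := (entryCLM i j).hasFDerivAt.comp_hasDerivAt 0 h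
  exact h2

end aux

lemma hasDerivAt_exp_mulVec (A : Matrix (Fin 3) (Fin 3) ℝ) (p : Fin 3 → ℝ) (i : Fin 3) :
    HasDerivAt (fun lam : ℝ => (NormedSpace.exp (lam • A) *ᵥ p) i) ((A *ᵥ p) i) 0 := by
  simp only [Matrix.mulVec, dotProduct]
  exact HasDerivAt.fun_sum fun j _ => (hasDerivAt_exp_entry A i j).mul_const (p j)

lemma norm3_pos {x : Fin 3 → ℝ} (hx : x ≠ 0) : 0 < norm3 x := by
  have h : 0 < ∑ i, x i ^ 2 := by
    rcases Function.ne_iff.mp hx with ⟨i, hi⟩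
    have hpos : 0 < x i ^ 2 := lt_of_le_of_ne (sq_nonneg _) (Ne.symm (pow_ne_zero 2 hi))
    exact hpos.trans_le (Finset.single_le_sum (fun j _ => sq_nonneg (x j)) (Finset.mem_univ i))
  exact Real.sqrt_pos.mpr h

lemma hasDerivAt_norm3 {f : Fin 3 → ℝ → ℝ} {v x : Fin 3 → ℝ}
    (hf : ∀ i, HasDerivAt (f i) (v i) 0) (hx : ∀ i, f i 0 = x i) (hx0 : x ≠ 0) :
    HasDerivAt (fun t => norm3 (fun i => f i t)) ((norm3 x)⁻¹ * (x ⬝ᵥ v)) 0 := by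
  have hS : HasDerivAt (fun t => ∑ i, (f i t) ^ 2) (∑ i, 2 * x i * v i) 0 := by
    apply HasDerivAt.fun_sum
    intro i _
    have h := (hf i).fun_pow 2
    simpa [hx i, mul_comm, mul_assoc, mul_left_comm] using h
  have hS0 : (∑ i, (f i 0) ^ 2) = ∑ i, x i ^ 2 := by
    exact Finset.sum_congr rfl fun i _ => by rw [hx i]
  have hSpos : 0 < ∑ i, x i ^ 2 := by
    have := norm3_pos hx0
    rw [norm3] at this
    exact (Real.sqrt_pos.mp this)
  have hsqrt : HasDerivAt Real.sqrt (1 / (2 * Real.sqrt (∑ i, x i ^ 2))) (∑ i, (f i 0) ^ 2) := by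
    rw [hS0]; exact Real.hasDerivAt_sqrt hSpos.ne'
  have hcomp := hsqrt.comp 0 hS
  have hval : (1 / (2 * Real.sqrt (∑ i, x i ^ 2))) * (∑ i, 2 * x i * v i)
      = (norm3 x)⁻¹ * (x ⬝ᵥ v) := by
    have hsum : (∑ i, 2 * x i * v i) = 2 * (x ⬝ᵥ v) := by
      rw [dotProduct, Finset.mul_sum]
      exact Finset.sum_congr rfl fun i _ => by ring
    have hnorm : norm3 x = Real.sqrt (∑ i, x i ^ 2) := rfl
    have hpos : 0 < Real.sqrt (∑ i, x i ^ 2) := Real.sqrt_pos.mpr hSpos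
    rw [hsum, ← hnorm]
    field_simp
  rw [← hval]
  exact hcomp

lemma skew_mulVec (g p : Fin 3 → ℝ) : skew g *ᵥ p = crossProduct g p := by
  funext i
  fin_cases i <;>
    simp [skew, crossProduct, Matrix.mulVec, dotProduct, Fin.sum_univ_three, Matrix.vecHead, Matrix.vecTail] <;> ring

lemma key (g : Fin 3 → ℝ) (R : Matrix (Fin 3) (Fin 3) ℝ) (p s : Fin 3 → ℝ)
    (hs : R *ᵥ p ≠ s) :
    HasDerivAt (fun lam : ℝ => norm3 (R *ᵥ (NormedSpace.exp (lam • skew g) *ᵥ p) - s))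
      (((norm3 (R *ᵥ p - s))⁻¹ • (R *ᵥ p - s)) ⬝ᵥ (R *ᵥ (crossProduct g p))) 0 := by
  have hne : R *ᵥ p - s ≠ 0 := sub_ne_zero.mpr hs
  have hf : ∀ i, HasDerivAt (fun lam : ℝ => (R *ᵥ (NormedSpace.exp (lam • skew g) *ᵥ p) - s) i)
      ((R *ᵥ (skew g *ᵥ p)) i) 0 := by
    intro i
    have h1 : ∀ lam : ℝ, (R *ᵥ (NormedSpace.exp (lam • skew g) *ᵥ p) - s) i
        = (∑ j, R i j * (NormedSpace.exp (lam • skew g) *ᵥ p) j) - s i := by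
      intro lam; rfl
    simp only [h1]
    have h2 : (R *ᵥ (skew g *ᵥ p)) i = ∑ j, R i j * (skew g *ᵥ p) j := rfl
    rw [h2]
    exact (HasDerivAt.fun_sum fun j _ =>
      (hasDerivAt_exp_mulVec (skew g) p j).const_mul (R i j)).sub_const (s i)
  have hx : ∀ i, (fun lam : ℝ => (R *ᵥ (NormedSpace.exp (lam • skew g) *ᵥ p) - s) i) 0
      = (R *ᵥ p - s) i := by
    intro i
    simp [NormedSpace.exp_zero]
  have H := hasDerivAt_norm3 hf hx hne
  have hfun : (fun t : ℝ => norm3 fun i =>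
      (fun lam : ℝ => (R *ᵥ (NormedSpace.exp (lam • skew g) *ᵥ p) - s) i) t)
      = fun lam : ℝ => norm3 (R *ᵥ (NormedSpace.exp (lam • skew g) *ᵥ p) - s) := rfl
  rw [hfun] at H
  have hval : (norm3 (R *ᵥ p - s))⁻¹ * ((R *ᵥ p - s) ⬝ᵥ (R *ᵥ (skew g *ᵥ p)))
      = ((norm3 (R *ᵥ p - s))⁻¹ • (R *ᵥ p - s)) ⬝ᵥ (R *ᵥ (crossProduct g p)) := by
    rw [skew_mulVec, smul_dotProduct]; rfl
  rw [hval] at H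
  exact H

/-- Infinitesimal effect of the rotation p ↦ exp(λg^×)p on the differenced pseudo-range,
and the unobservability criterion for the rotation about axis g. -/
theorem stmt_11 (g : Fin 3 → ℝ)
    (R : Matrix (Fin 3) (Fin 3) ℝ) (hR : Rᵀ * R = 1) (hdet : R.det = 1)
    (sk sl p : Fin 3 → ℝ) (hk : R *ᵥ p ≠ sk) (hl : R *ᵥ p ≠ sl) :
    let nk : Fin 3 → ℝ := (norm3 (R *ᵥ p - sk))⁻¹ • (R *ᵥ p - sk)
    let nl : Fin 3 → ℝ := (norm3 (R *ᵥ p - sl))⁻¹ • (R *ᵥ p - sl)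
    let ρ : (Fin 3 → ℝ) → ℝ := fun q => norm3 (R *ᵥ q - sk) - norm3 (R *ᵥ q - sl)
    HasDerivAt (fun lam : ℝ => ρ (NormedSpace.exp (lam • skew g) *ᵥ p))
      ((nk - nl) ⬝ᵥ (R *ᵥ (crossProduct g p))) 0 ∧
    (HasDerivAt (fun lam : ℝ => ρ (NormedSpace.exp (lam • skew g) *ᵥ p)) 0 0 ↔
      (nk - nl) ⬝ᵥ (R *ᵥ (crossProduct g p)) = 0) := by
  intro nk nl ρ
  have Hk := key g R p sk hk
  have Hl := key g R p sl hl
  have H : HasDerivAt (fun lam : ℝ => ρ (NormedSpace.exp (lam • skew g) *ᵥ p))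
      ((nk - nl) ⬝ᵥ (R *ᵥ (crossProduct g p))) 0 := by
    have h := Hk.sub Hl
    rw [← sub_dotProduct] at h
    exact h
  exact ⟨H, ⟨fun h0 => H.unique h0, fun hz => hz ▸ H⟩⟩
end

section
/- The discrete IMU propagation R_{k+1} = R_k Γ₀(ω Δt), v_{k+1} = v_k + g Δt + R_k Γ₁(ωΔt) a Δt, p_{k+1} = p_k + v_k Δt + ½ g Δt² + R_k Γ₂(ωΔt) a Δt² is the exact solution at time Δt of the ODE system Ṙ = R ω^×, v̇ = R a + g, ṗ = v with constant inputs ω, a ∈ ℝ³ and initial condition (R_k, v_k, p_k). -/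
open Matrix

noncomputable def Gamma (m : ℕ) (θ : Fin 3 → ℝ) : Matrix (Fin 3) (Fin 3) ℝ :=
  ∑' n : ℕ, (((m + n).factorial : ℝ))⁻¹ • (skew θ) ^ n

namespace Stmt14Aux

variable (A : Matrix (Fin 3) (Fin 3) ℝ)

noncomputable def bnd : ℝ := ∑ i, ∑ j, |A i j|

lemma bnd_nonneg : 0 ≤ bnd A := by
  apply Finset.sum_nonneg; intros; apply Finset.sum_nonneg; intros; positivity

lemma colsum_le (j : Fin 3) : ∑ k, |A k j| ≤ bnd A := by
  unfold bnd
  rw [Finset.sum_comm]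
  apply Finset.single_le_sum (f := fun j => ∑ k, |A k j|) (fun _ _ => by positivity)
    (Finset.mem_univ j)

lemma abs_pow_entry_le (n : ℕ) (i j : Fin 3) : |(A ^ n) i j| ≤ bnd A ^ n := by
  induction n generalizing i j with
  | zero =>
    simp only [pow_zero, Matrix.one_apply]
    split <;> simp
  | succ n ih =>
    rw [pow_succ, Matrix.mul_apply]
    calc |∑ k, (A ^ n) i k * A k j| ≤ ∑ k, |(A ^ n) i k * A k j| := Finset.abs_sum_le_sum_abs _ _
      _ ≤ ∑ k, bnd A ^ n * |A k j| := by
          apply Finset.sum_le_sum; intro k _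
          rw [abs_mul]
          exact mul_le_mul_of_nonneg_right (ih i k) (abs_nonneg _)
      _ = bnd A ^ n * ∑ k, |A k j| := by rw [Finset.mul_sum]
      _ ≤ bnd A ^ n * bnd A :=
          mul_le_mul_of_nonneg_left (colsum_le A j) (pow_nonneg (bnd_nonneg A) n)
      _ = bnd A ^ (n + 1) := by rw [pow_succ]

lemma fact_inv_le (m n : ℕ) : ((m + n).factorial : ℝ)⁻¹ ≤ (n.factorial : ℝ)⁻¹ := by
  apply inv_anti₀ (by positivity)
  exact_mod_cast Nat.factorial_le (Nat.le_add_left n m)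

lemma summable_entry (m : ℕ) (t : ℝ) (i j : Fin 3) :
    Summable fun n : ℕ => ((m + n).factorial : ℝ)⁻¹ * t ^ n * ((A ^ n) i j) := by
  have hs := Real.summable_pow_div_factorial (|t| * bnd A)
  apply Summable.of_norm_bounded hs
  intro n
  rw [Real.norm_eq_abs, abs_mul, abs_mul, abs_inv, abs_of_nonneg (by positivity :
    (0:ℝ) ≤ ((m+n).factorial : ℝ)), abs_pow, mul_pow, div_eq_mul_inv]
  calc ((m + n).factorial : ℝ)⁻¹ * |t| ^ n * |(A ^ n) i j|
      ≤ (n.factorial : ℝ)⁻¹ * |t| ^ n * bnd A ^ n := by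
        exact mul_le_mul (mul_le_mul_of_nonneg_right (fact_inv_le m n) (by positivity))
          (abs_pow_entry_le A n i j) (abs_nonneg _) (by positivity)
    _ = |t| ^ n * bnd A ^ n * (n.factorial : ℝ)⁻¹ := by ring

noncomputable def G (m : ℕ) (t : ℝ) : Matrix (Fin 3) (Fin 3) ℝ :=
  ∑' n : ℕ, (((m + n).factorial : ℝ)⁻¹ * t ^ n) • A ^ n

lemma summable_G (m : ℕ) (t : ℝ) :
    Summable fun n : ℕ => (((m + n).factorial : ℝ)⁻¹ * t ^ n) • A ^ n := by
  refine Pi.summable.mpr fun i => Pi.summable.mpr fun j => ?_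
  exact summable_entry A m t i j

lemma G_apply (m : ℕ) (t : ℝ) (i j : Fin 3) :
    G A m t i j = ∑' n : ℕ, ((m + n).factorial : ℝ)⁻¹ * t ^ n * ((A ^ n) i j) := by
  unfold G
  erw [tsum_apply (summable_G A m t), tsum_apply ((Pi.summable).mp (summable_G A m t) i)]
  rfl

noncomputable def F (m : ℕ) (t : ℝ) : Matrix (Fin 3) (Fin 3) ℝ := t ^ m • G A m t

lemma F_apply (m : ℕ) (t : ℝ) (i j : Fin 3) :
    F A m t i j = ∑' n : ℕ, ((m + n).factorial : ℝ)⁻¹ * t ^ (m + n) * ((A ^ n) i j) := by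
  show t ^ m * G A m t i j = _
  rw [G_apply, ← tsum_mul_left]
  congr 1; funext n
  rw [pow_add]; ring

lemma summable_entry' (m : ℕ) (t : ℝ) (i j : Fin 3) :
    Summable fun n : ℕ => ((m + n).factorial : ℝ)⁻¹ * t ^ (m + n) * ((A ^ n) i j) := by
  apply ((summable_entry A m t i j).mul_left (t ^ m)).congr
  intro n; rw [pow_add]; ring

lemma summable_F (m : ℕ) (t : ℝ) :
    Summable fun n : ℕ => (((m + n).factorial : ℝ)⁻¹ * t ^ (m + n)) • A ^ n := by
  refine Pi.summable.mpr fun i => Pi.summable.mpr fun j => ?_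
  exact summable_entry' A m t i j

lemma F_eq_tsum (m : ℕ) (t : ℝ) :
    F A m t = ∑' n : ℕ, (((m + n).factorial : ℝ)⁻¹ * t ^ (m + n)) • A ^ n := by
  ext i j
  erw [F_apply, tsum_apply (summable_F A m t), tsum_apply ((Pi.summable).mp (summable_F A m t) i)]
  rfl

lemma F_succ_zero (m : ℕ) : F A (m + 1) 0 = 0 := by
  show (0:ℝ) ^ (m+1) • G A (m+1) 0 = 0
  simp

lemma F_zero_zero : F A 0 0 = 1 := by
  rw [F_eq_tsum]
  rw [tsum_eq_single 0 (by intro n hn; simp [zero_pow hn])]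
  simp

lemma F_zero_exp (t : ℝ) : F A 0 t = NormedSpace.exp (t • A) := by
  rw [F_eq_tsum, NormedSpace.exp_eq_tsum ℝ]
  apply tsum_congr; intro n
  rw [smul_pow, smul_smul]
  norm_num

lemma F_zero_mul_neg (t : ℝ) : F A 0 t * F A 0 (-t) = 1 := by
  rw [F_zero_exp, F_zero_exp, ← Matrix.exp_add_of_commute]
  · rw [show t • A + (-t) • A = 0 by rw [← add_smul]; simp, NormedSpace.exp_zero]
  · exact ((Commute.refl A).smul_left t).smul_right (-t)

lemma commute_F_zero (t : ℝ) : A * F A 0 t = F A 0 t * A := by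
  rw [F_zero_exp]
  exact ((Commute.refl A).smul_right t).exp_right

lemma F_zero_eq_one_add (t : ℝ) : F A 0 t = 1 + A * F A 1 t := by
  rw [F_eq_tsum, F_eq_tsum]
  rw [← Summable.tsum_mul_left A (summable_F A 1 t)]
  rw [Summable.tsum_eq_zero_add ((summable_F A 0 t))]
  congr 1
  · norm_num
  · apply tsum_congr; intro n
    rw [Matrix.mul_smul, ← pow_succ']
    have h : 0 + (n + 1) = 1 + n := by omega
    rw [h]

lemma hasDerivAt_F (m : ℕ) (t : ℝ) (i j : Fin 3) :
    HasDerivAt (fun s => F A (m + 1) s i j) (F A m t i j) t := by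
  have hfun : (fun s => F A (m + 1) s i j)
      = fun s => ∑' n : ℕ, ((m + 1 + n).factorial : ℝ)⁻¹ * s ^ (m + 1 + n) * ((A ^ n) i j) :=
    funext fun s => F_apply A (m + 1) s i j
  rw [hfun, F_apply]
  set r : ℝ := |t| + 1 with hrdef
  have hr0 : (0:ℝ) ≤ r := by positivity
  have htr : |t| < r := by simp [hrdef]
  have hu : Summable (fun n : ℕ => r ^ m * ((r * bnd A) ^ n / n.factorial)) :=
    (Real.summable_pow_div_factorial (r * bnd A)).mul_left _
  have key : ∀ n (y : ℝ), |y| ≤ r →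
      ‖((m + n).factorial : ℝ)⁻¹ * y ^ (m + n) * ((A ^ n) i j)‖
        ≤ r ^ m * ((r * bnd A) ^ n / n.factorial) := by
    intro n y hy
    rw [Real.norm_eq_abs, abs_mul, abs_mul, abs_inv,
      abs_of_nonneg (show (0:ℝ) ≤ ((m + n).factorial : ℝ) by positivity), abs_pow]
    calc ((m + n).factorial : ℝ)⁻¹ * |y| ^ (m + n) * |(A ^ n) i j|
        ≤ (n.factorial : ℝ)⁻¹ * r ^ (m + n) * bnd A ^ n :=
          mul_le_mul (mul_le_mul (fact_inv_le m n)
            (pow_le_pow_left₀ (abs_nonneg y) hy _) (by positivity) (by positivity))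
            (abs_pow_entry_le A n i j) (abs_nonneg _) (by positivity)
      _ = r ^ m * ((r * bnd A) ^ n / n.factorial) := by
          rw [pow_add, mul_pow, div_eq_mul_inv]; ring
  apply hasDerivAt_tsum_of_isPreconnected hu (isOpen_Ioo (a := -r) (b := r)) isPreconnected_Ioo
    (g := fun n s => ((m + 1 + n).factorial : ℝ)⁻¹ * s ^ (m + 1 + n) * ((A ^ n) i j))
    (g' := fun n y => ((m + n).factorial : ℝ)⁻¹ * y ^ (m + n) * ((A ^ n) i j))
    ?_ ?_ (y₀ := t) ?_ ?_ ?_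
  · intro n y hy
    have h1 := ((hasDerivAt_pow (m + 1 + n) y).const_mul
      (((m + 1 + n).factorial : ℝ)⁻¹)).mul_const ((A ^ n) i j)
    refine h1.congr_deriv ?_
    have h2 : m + 1 + n - 1 = m + n := by omega
    rw [h2]
    have hfac : ((m + 1 + n).factorial : ℝ) = (m + 1 + n) * ((m + n).factorial : ℝ) := by
      have h3 : m + 1 + n = (m + n) + 1 := by omega
      rw [h3, Nat.factorial_succ]; push_cast; ring
    rw [hfac]
    have hne : ((m + n).factorial : ℝ) ≠ 0 := by positivity
    have hne2 : ((m + 1 + n : ℕ) : ℝ) ≠ 0 := by positivity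
    field_simp
    push_cast
    ring
  · intro n y hy
    exact key n y (le_of_lt (abs_lt.mpr ⟨hy.1, hy.2⟩))
  · exact Set.mem_Ioo.mpr (abs_lt.mp htr)
  · exact (summable_entry' A (m + 1) t i j)
  · exact Set.mem_Ioo.mpr (abs_lt.mp htr)

lemma hasDerivAt_F_zero (t : ℝ) (i j : Fin 3) :
    HasDerivAt (fun s => F A 0 s i j) ((F A 0 t * A) i j) t := by
  have hfun : (fun s => F A 0 s i j)
      = fun s => (1 : Matrix (Fin 3) (Fin 3) ℝ) i j + ∑ k, A i k * F A 1 s k j := by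
    funext s
    rw [F_zero_eq_one_add A s]
    simp [Matrix.add_apply, Matrix.mul_apply]
  rw [hfun]
  have hd : HasDerivAt (fun s => ∑ k, A i k * F A 1 s k j) (∑ k, A i k * F A 0 t k j) t := by
    apply HasDerivAt.fun_sum
    intro k _
    have h := (hasDerivAt_F A 0 t k j).const_mul (A i k)
    simpa using h
  have h2 := hd.const_add ((1 : Matrix (Fin 3) (Fin 3) ℝ) i j)
  refine h2.congr_deriv ?_
  rw [← commute_F_zero, Matrix.mul_apply]

lemma skew_smul (t : ℝ) (v : Fin 3 → ℝ) : skew (t • v) = t • skew v := by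
  unfold skew
  ext i j
  fin_cases i <;> fin_cases j <;> simp [Matrix.smul_apply]

lemma G_eq_gamma (ω : Fin 3 → ℝ) (m : ℕ) (t : ℝ) : G (skew ω) m t = Gamma m (t • ω) := by
  unfold Gamma G
  rw [skew_smul]
  apply tsum_congr; intro n
  rw [smul_pow, smul_smul]

lemma F_eq_gamma (ω : Fin 3 → ℝ) (m : ℕ) (t : ℝ) :
    F (skew ω) m t = t ^ m • Gamma m (t • ω) := by
  show t ^ m • G (skew ω) m t = _
  rw [G_eq_gamma]

end Stmt14Aux

open Stmt14Aux in
/-- The discrete IMU propagation formulas give the exact solution at time Δt of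
Ṙ = Rω^×, v̇ = Ra + g, ṗ = v with constant inputs ω, a and initial condition (R_k,v_k,p_k). -/
theorem stmt_14 (ω a g : Fin 3 → ℝ) (Δt : ℝ) (hΔt : 0 < Δt)
    (Rk : Matrix (Fin 3) (Fin 3) ℝ) (hRk : Rkᵀ * Rk = 1) (hdet : Rk.det = 1)
    (vk pk : Fin 3 → ℝ)
    (R : ℝ → Matrix (Fin 3) (Fin 3) ℝ) (v p : ℝ → Fin 3 → ℝ)
    (hR : ∀ t : ℝ, ∀ i j : Fin 3, HasDerivAt (fun s => R s i j) ((R t * skew ω) i j) t)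
    (hv : ∀ t : ℝ, ∀ i : Fin 3, HasDerivAt (fun s => v s i) ((R t *ᵥ a + g) i) t)
    (hp : ∀ t : ℝ, ∀ i : Fin 3, HasDerivAt (fun s => p s i) (v t i) t)
    (hR0 : R 0 = Rk) (hv0 : v 0 = vk) (hp0 : p 0 = pk) :
    R Δt = Rk * Gamma 0 (Δt • ω) ∧
    v Δt = vk + Δt • g + Δt • ((Rk * Gamma 1 (Δt • ω)) *ᵥ a) ∧
    p Δt = pk + Δt • vk + (Δt ^ 2 / 2) • g + Δt ^ 2 • ((Rk * Gamma 2 (Δt • ω)) *ᵥ a) := by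
  set A := skew ω with hA
  -- Step 1: R s = Rk * F A 0 s for all s
  have hφ : ∀ (i j : Fin 3) (s : ℝ),
      HasDerivAt (fun u => ∑ k, R u i k * F A 0 (-u) k j) 0 s := by
    intro i j s
    have hterm : ∀ k : Fin 3, HasDerivAt (fun u => R u i k * F A 0 (-u) k j)
        ((R s * A) i k * F A 0 (-s) k j + R s i k * (-((F A 0 (-s) * A) k j))) s := by
      intro k
      have h1 := hasDerivAt_F_zero A (-s) k j
      have h2 : HasDerivAt (fun u : ℝ => -u) (-1) s := (hasDerivAt_id s).neg
      have h3 : HasDerivAt (fun u => F A 0 (-u) k j) (-((F A 0 (-s) * A) k j)) s := by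
        have := h1.comp s h2
        exact this.congr_deriv (by simp)
      exact (hR s i k).mul h3
    have hsum := HasDerivAt.fun_sum (fun k (_ : k ∈ Finset.univ) => hterm k)
    refine hsum.congr_deriv ?_
    rw [Finset.sum_add_distrib]
    have e1 : ∑ k, (R s * A) i k * F A 0 (-s) k j = ((R s * A) * F A 0 (-s)) i j :=
      (Matrix.mul_apply).symm
    have e2 : ∑ k, R s i k * (-((F A 0 (-s) * A) k j))
        = -((R s * (F A 0 (-s) * A)) i j) := by
      rw [Matrix.mul_apply, ← Finset.sum_neg_distrib]
      apply Finset.sum_congr rfl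
      intro k _
      ring
    rw [e1, e2, ← commute_F_zero, ← mul_assoc]
    ring
  have hRconst : ∀ (s : ℝ), R s * F A 0 (-s) = Rk := by
    intro s
    ext i j
    have hc := is_const_of_deriv_eq_zero (f := fun u => ∑ k, R u i k * F A 0 (-u) k j)
      (fun u => (hφ i j u).differentiableAt) (fun u => (hφ i j u).deriv) s 0
    have h0 : ∑ k, R 0 i k * F A 0 (-(0:ℝ)) k j = Rk i j := by
      rw [neg_zero, F_zero_zero, hR0]
      simp [Matrix.one_apply, Finset.sum_ite_eq]
    rw [Matrix.mul_apply]
    rw [hc, h0]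
  have hRt : ∀ s : ℝ, R s = Rk * F A 0 s := by
    intro s
    have hinv : F A 0 (-s) * F A 0 s = 1 := by
      have := F_zero_mul_neg A (-s)
      rwa [neg_neg] at this
    calc R s = R s * (F A 0 (-s) * F A 0 s) := by rw [hinv, mul_one]
      _ = (R s * F A 0 (-s)) * F A 0 s := by rw [mul_assoc]
      _ = Rk * F A 0 s := by rw [hRconst]
  -- Step 2: v
  have hcand : ∀ (s : ℝ) (i : Fin 3), HasDerivAt (fun u => ((Rk * F A 1 u) *ᵥ a) i)
      (((Rk * F A 0 s) *ᵥ a) i) s := by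
    intro s i
    have he : ∀ (M : Matrix (Fin 3) (Fin 3) ℝ), ((Rk * M) *ᵥ a) i
        = ∑ k, (∑ l, Rk i l * M l k) * a k := by
      intro M
      simp [Matrix.mulVec, Matrix.mul_apply, dotProduct]
    simp only [he]
    apply HasDerivAt.fun_sum
    intro k _
    apply HasDerivAt.mul_const
    apply HasDerivAt.fun_sum
    intro l _
    have h := (hasDerivAt_F A 0 s l k).const_mul (Rk i l)
    simpa using h
  have hvt : ∀ (s : ℝ) (i : Fin 3), v s i = vk i + s * g i + ((Rk * F A 1 s) *ᵥ a) i := by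
    intro s i
    have hψ : ∀ u : ℝ, HasDerivAt
        (fun u => v u i - (vk i + u * g i + ((Rk * F A 1 u) *ᵥ a) i)) 0 u := by
      intro u
      have hb : HasDerivAt (fun u : ℝ => u * g i) (g i) u := by
        simpa using (hasDerivAt_id u).mul_const (g i)
      have h2 := (hb.const_add (vk i)).add (hcand u i)
      have h3 := (hv u i).sub h2
      refine h3.congr_deriv ?_
      rw [hRt u]
      simp [Pi.add_apply]
      ring
    have hc := is_const_of_deriv_eq_zero
      (f := fun u => v u i - (vk i + u * g i + ((Rk * F A 1 u) *ᵥ a) i))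
      (fun u => (hψ u).differentiableAt) (fun u => (hψ u).deriv) s 0
    have hF10 : F A 1 0 = 0 := F_succ_zero A 0
    have h0 : v 0 i - (vk i + 0 * g i + ((Rk * F A 1 0) *ᵥ a) i) = 0 := by
      rw [hF10, hv0]
      simp [Matrix.mulVec_zero]
    rw [h0] at hc
    linarith [hc]
  -- Step 3: p
  have hpt : ∀ (s : ℝ) (i : Fin 3),
      p s i = pk i + s * vk i + s ^ 2 / 2 * g i + ((Rk * F A 2 s) *ᵥ a) i := by
    intro s i
    have hcand2 : ∀ (u : ℝ), HasDerivAt (fun w => ((Rk * F A 2 w) *ᵥ a) i)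
        (((Rk * F A 1 u) *ᵥ a) i) u := by
      intro u
      have he : ∀ (M : Matrix (Fin 3) (Fin 3) ℝ), ((Rk * M) *ᵥ a) i
          = ∑ k, (∑ l, Rk i l * M l k) * a k := by
        intro M
        simp [Matrix.mulVec, Matrix.mul_apply, dotProduct]
      simp only [he]
      apply HasDerivAt.fun_sum
      intro k _
      apply HasDerivAt.mul_const
      apply HasDerivAt.fun_sum
      intro l _
      have h := (hasDerivAt_F A 1 u l k).const_mul (Rk i l)
      norm_num at h
      exact h
    have hχ : ∀ u : ℝ, HasDerivAt
        (fun w => p w i - (pk i + w * vk i + w ^ 2 / 2 * g i + ((Rk * F A 2 w) *ᵥ a) i)) 0 u := by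
      intro u
      have hb : HasDerivAt (fun w : ℝ => w * vk i) (vk i) u := by
        simpa using (hasDerivAt_id u).mul_const (vk i)
      have hq : HasDerivAt (fun w : ℝ => w ^ 2 / 2 * g i) (u * g i) u := by
        have := ((hasDerivAt_pow 2 u).div_const 2).mul_const (g i)
        refine this.congr_deriv ?_
        ring
      have h2 := (((hb.const_add (pk i)).add hq).add (hcand2 u))
      have h3 := (hp u i).sub h2
      refine h3.congr_deriv ?_
      rw [hvt u i]
      ring
    have hc := is_const_of_deriv_eq_zero
      (f := fun w => p w i - (pk i + w * vk i + w ^ 2 / 2 * g i + ((Rk * F A 2 w) *ᵥ a) i))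
      (fun u => (hχ u).differentiableAt) (fun u => (hχ u).deriv) s 0
    have hF20 : F A 2 0 = 0 := F_succ_zero A 1
    have h0 : p 0 i - (pk i + 0 * vk i + (0:ℝ) ^ 2 / 2 * g i + ((Rk * F A 2 0) *ᵥ a) i) = 0 := by
      rw [hF20, hp0]
      simp [Matrix.mulVec_zero]
    rw [h0] at hc
    linarith [hc]
  refine ⟨?_, ?_, ?_⟩
  · rw [hRt Δt, hA, F_eq_gamma]
    norm_num
  · funext i
    rw [hvt Δt i, hA, F_eq_gamma]
    simp only [pow_one, Matrix.mul_smul, Matrix.smul_mulVec, Pi.add_apply,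
      Pi.smul_apply, smul_eq_mul]
  · funext i
    rw [hpt Δt i, hA, F_eq_gamma]
    simp only [Matrix.mul_smul, Matrix.smul_mulVec, Pi.add_apply,
      Pi.smul_apply, smul_eq_mul]
end

section
/- Let c(p) = R_mᵀ(p − p_m) be a landmark's coordinates in camera frame m, where (R_m, p_m) ∈ SO(3)×ℝ³ is the camera pose. With the invariant error parametrization R_m = Γ₀(δθ)R̂_m, p_m = Γ₀(δθ)p̂_m + Γ₁(δθ)δp_m, p_f = Γ₀(δθ₀)p̂_f + Γ₁(δθ₀)δp_f (anchored to pose 0 with error δθ₀), the first-order expansion of the error of c satisfies: ∂(δc)/∂(δθ_m) = R̂_mᵀ (p̂_f)^×, ∂(δc)/∂(δθ₀) = −R̂_mᵀ(p̂_f)^×, ∂(δc)/∂(δp_m) = −R̂_mᵀ, ∂(δc)/∂(δp_f) = R̂_mᵀ. -/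
open Matrix

open NormedSpace
attribute [local instance] Matrix.linftyOpNormedRing Matrix.linftyOpNormedAlgebra

lemma skew_zero : skew 0 = 0 := by
  ext i j; fin_cases i <;> fin_cases j <;> simp [skew, vecHead, vecTail]

lemma skew_smul (s : ℝ) (u : Fin 3 → ℝ) : skew (s • u) = s • skew u := by
  ext i j; fin_cases i <;> fin_cases j <;> simp [skew] <;> ring

lemma skew_transpose (u : Fin 3 → ℝ) : (skew u)ᵀ = -skew u := by
  ext i j; fin_cases i <;> fin_cases j <;> simp [skew, vecHead, vecTail]

lemma skew_mulVec_antisymm (u v : Fin 3 → ℝ) : skew u *ᵥ v = -(skew v *ᵥ u) := by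
  funext i; fin_cases i <;> simp [skew, mulVec, dotProduct, Fin.sum_univ_succ] <;> ring

lemma Gamma_zero (m : ℕ) (hm : m ≤ 1) : Gamma m 0 = 1 := by
  rw [Gamma, skew_zero]
  rw [tsum_eq_single 0 (fun n hn => by simp [zero_pow hn])]
  interval_cases m <;> norm_num

lemma Gamma0_eq_exp (θ : Fin 3 → ℝ) : Gamma 0 θ = exp (skew θ) := by
  rw [exp_eq_tsum (𝕂 := ℝ), Gamma]
  simp

lemma entry_hasDerivAt {f : ℝ → Matrix (Fin 3) (Fin 3) ℝ} {f' : Matrix (Fin 3) (Fin 3) ℝ}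
    {s : ℝ} (h : HasDerivAt f f' s) (i j : Fin 3) :
    HasDerivAt (fun t => f t i j) (f' i j) s := by
  let L : Matrix (Fin 3) (Fin 3) ℝ →ₗ[ℝ] ℝ :=
    (LinearMap.proj j).comp (LinearMap.proj (R := ℝ) (φ := fun _ : Fin 3 => Fin 3 → ℝ) i)
  have := (L.toContinuousLinearMap.hasFDerivAt (x := f s)).comp_hasDerivAt s h
  exact this

lemma key_s16 (B A : Matrix (Fin 3) (Fin 3) ℝ) (v : Fin 3 → ℝ) (i : Fin 3) :
    HasDerivAt (fun s : ℝ => ((B * exp (s • A)) *ᵥ v) i) (((B * A) *ᵥ v) i) 0 := by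
  have hE := hasDerivAt_exp_smul_const (𝕂 := ℝ) A 0
  rw [zero_smul, exp_zero, one_mul] at hE
  have hjk : ∀ j k : Fin 3, HasDerivAt (fun s : ℝ => exp (s • A) j k) (A j k) 0 :=
    fun j k => entry_hasDerivAt hE j k
  have hrw : (fun s : ℝ => ((B * exp (s • A)) *ᵥ v) i)
      = fun s => ∑ j, B i j * ∑ k, exp (s • A) j k * v k := by
    funext s
    simp only [Matrix.mulVec, dotProduct, Matrix.mul_apply, Finset.sum_mul, mul_assoc,
      Finset.mul_sum]
    exact Finset.sum_comm
  have hrw' : ((B * A) *ᵥ v) i = ∑ j, B i j * ∑ k, A j k * v k := by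
    simp only [Matrix.mulVec, dotProduct, Matrix.mul_apply, Finset.sum_mul, mul_assoc,
      Finset.mul_sum]
    exact Finset.sum_comm
  rw [hrw, hrw']
  exact HasDerivAt.fun_sum fun j _ =>
    ((HasDerivAt.fun_sum fun k _ => (hjk j k).mul_const (v k)).const_mul (B i j))

lemma skew_cross (R : Matrix (Fin 3) (Fin 3) ℝ) (u v : Fin 3 → ℝ) :
    (R * skew u) *ᵥ v = -((R * skew v) *ᵥ u) := by
  rw [← Matrix.mulVec_mulVec, skew_mulVec_antisymm, Matrix.mulVec_neg, Matrix.mulVec_mulVec]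

/-- Error of the landmark coordinates in camera frame m under the invariant error
parametrization, as a function of the four error variables (δθ_m, δp_m, δθ₀, δp_f). -/
noncomputable def errC (Rhm : Matrix (Fin 3) (Fin 3) ℝ) (phm phf : Fin 3 → ℝ)
    (δθm δpm δθ0 δpf : Fin 3 → ℝ) : Fin 3 → ℝ :=
  (Gamma 0 δθm * Rhm)ᵀ *ᵥ
      ((Gamma 0 δθ0 *ᵥ phf + Gamma 1 δθ0 *ᵥ δpf) -
        (Gamma 0 δθm *ᵥ phm + Gamma 1 δθm *ᵥ δpm)) -
    Rhmᵀ *ᵥ (phf - phm)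

/-- The first-order (directional) partial derivatives of the camera-frame landmark error
at zero error are given by the claimed invariant-filter visual Jacobians. -/
theorem stmt_16 (Rhm : Matrix (Fin 3) (Fin 3) ℝ) (hR : Rhmᵀ * Rhm = 1)
    (hdet : Rhm.det = 1) (phm phf : Fin 3 → ℝ) :
    (∀ u : Fin 3 → ℝ, ∀ i : Fin 3,
      HasDerivAt (fun s : ℝ => errC Rhm phm phf (s • u) 0 0 0 i)
        (((Rhmᵀ * skew phf) *ᵥ u) i) 0) ∧
    (∀ u : Fin 3 → ℝ, ∀ i : Fin 3,
      HasDerivAt (fun s : ℝ => errC Rhm phm phf 0 0 (s • u) 0 i)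
        ((-((Rhmᵀ * skew phf) *ᵥ u)) i) 0) ∧
    (∀ u : Fin 3 → ℝ, ∀ i : Fin 3,
      HasDerivAt (fun s : ℝ => errC Rhm phm phf 0 (s • u) 0 0 i)
        ((-(Rhmᵀ *ᵥ u)) i) 0) ∧
    (∀ u : Fin 3 → ℝ, ∀ i : Fin 3,
      HasDerivAt (fun s : ℝ => errC Rhm phm phf 0 0 0 (s • u) i)
        ((Rhmᵀ *ᵥ u) i) 0) := by

  have g0 : Gamma 0 0 = 1 := Gamma_zero 0 (by norm_num)
  have g1 : Gamma 1 0 = 1 := Gamma_zero 1 (by norm_num)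
  refine ⟨fun u i => ?_, fun u i => ?_, fun u i => ?_, fun u i => ?_⟩
  · -- δθm
    have hfun : (fun s : ℝ => errC Rhm phm phf (s • u) 0 0 0 i)
        = fun s : ℝ => ((Rhmᵀ * exp ((-s) • skew u)) *ᵥ phf) i -
            ((Rhmᵀ *ᵥ phm) i + (Rhmᵀ *ᵥ (phf - phm)) i) := by
      funext s
      have hT : (exp (s • skew u))ᵀ = exp ((-s) • skew u) := by
        rw [← Matrix.exp_transpose, Matrix.transpose_smul, skew_transpose, smul_neg, ← neg_smul]
      have hInv : exp ((-s) • skew u) * exp (s • skew u) = 1 := by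
        rw [← Matrix.exp_add_of_commute _ _ (((Commute.refl (skew u)).smul_left (-s)).smul_right s),
          ← add_smul, neg_add_cancel, zero_smul, exp_zero]
      have hvec : (exp (s • skew u) * Rhm)ᵀ *ᵥ (phf - exp (s • skew u) *ᵥ phm)
          = (Rhmᵀ * exp ((-s) • skew u)) *ᵥ phf - Rhmᵀ *ᵥ phm := by
        rw [Matrix.transpose_mul, hT, Matrix.mulVec_sub, Matrix.mulVec_mulVec, mul_assoc,
          hInv, mul_one]
      rw [errC]
      simp only [Gamma0_eq_exp, skew_smul, skew_zero, exp_zero, g1, Matrix.mulVec_zero,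
        add_zero, Matrix.one_mulVec]
      rw [hvec]
      simp only [Pi.sub_apply, Pi.add_apply]
      ring
    rw [hfun]
    have h0 : HasDerivAt (fun t : ℝ => ((Rhmᵀ * exp (t • skew u)) *ᵥ phf) i)
        (((Rhmᵀ * skew u) *ᵥ phf) i) (-0 : ℝ) := by
      rw [neg_zero]; exact key_s16 Rhmᵀ (skew u) phf i
    have h2 := (h0.comp 0 (hasDerivAt_neg 0)).sub_const
      ((Rhmᵀ *ᵥ phm) i + (Rhmᵀ *ᵥ (phf - phm)) i)
    have hval : ((Rhmᵀ * skew u) *ᵥ phf) i * (-1) = ((Rhmᵀ * skew phf) *ᵥ u) i := by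
      rw [skew_cross]; simp
    rw [hval] at h2
    simpa [Function.comp] using h2
  · -- δθ0
    have hfun : (fun s : ℝ => errC Rhm phm phf 0 0 (s • u) 0 i)
        = fun s : ℝ => ((Rhmᵀ * exp (s • skew u)) *ᵥ phf) i -
            ((Rhmᵀ *ᵥ phm) i + (Rhmᵀ *ᵥ (phf - phm)) i) := by
      funext s
      rw [errC]
      simp only [Gamma0_eq_exp, skew_smul, skew_zero, exp_zero, g1, Matrix.mulVec_zero,
        add_zero, Matrix.one_mul, Matrix.one_mulVec, Matrix.mulVec_sub, Matrix.mulVec_mulVec]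
      simp only [Pi.sub_apply, Pi.add_apply]
      ring
    rw [hfun]
    have h2 := (key_s16 Rhmᵀ (skew u) phf i).sub_const
      ((Rhmᵀ *ᵥ phm) i + (Rhmᵀ *ᵥ (phf - phm)) i)
    have hval : ((Rhmᵀ * skew u) *ᵥ phf) i = (-((Rhmᵀ * skew phf) *ᵥ u)) i := by
      rw [skew_cross]
    rwa [hval] at h2
  · -- δpm
    have hfun : (fun s : ℝ => errC Rhm phm phf 0 (s • u) 0 0 i)
        = fun s : ℝ => s * (-(Rhmᵀ *ᵥ u) i) := by
      funext s
      rw [errC, g0, g1]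
      simp only [Matrix.mulVec_zero, add_zero, Matrix.one_mul, Matrix.one_mulVec,
        Matrix.mulVec_sub, Matrix.mulVec_add, Matrix.mulVec_smul]
      simp only [Pi.sub_apply, Pi.add_apply, Pi.smul_apply, smul_eq_mul]
      ring
    rw [hfun]
    have := hasDerivAt_mul_const (x := (0:ℝ)) (-(Rhmᵀ *ᵥ u) i)
    simpa using this
  · -- δpf
    have hfun : (fun s : ℝ => errC Rhm phm phf 0 0 0 (s • u) i)
        = fun s : ℝ => s * ((Rhmᵀ *ᵥ u) i) := by
      funext s
      rw [errC, g0, g1]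
      simp only [Matrix.mulVec_zero, add_zero, Matrix.one_mul, Matrix.one_mulVec,
        Matrix.mulVec_sub, Matrix.mulVec_add, Matrix.mulVec_smul]
      simp only [Pi.sub_apply, Pi.add_apply, Pi.smul_apply, smul_eq_mul]
      ring
    rw [hfun]
    exact hasDerivAt_mul_const _
end
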